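/- arXiv:1412.6726 — 2 statements merged into one kernel-verified Lean document; each statement's English description precedes it below -/
import Mathlib

section
/- Let p(t) be a differentiable solution of the formation control system ȧ_i = Σ_{j∈V_i} u_ij·(a_i−a_j) defined on an interval. Then the function t ↦ Φ(p(t)) is nonincreasing; in particular Φ(p(t)) ≤ Φ(p(s)) whenever t ≥ s. -/
open Finset
open scoped RealInnerProductSpace Classical

/-- The decentralized control law `u_ij(p)`. -/
noncomputable def uCtrl {n N : ℕ} (b a : Fin N → EuclideanSpace ℝ (Fin n)) (i j : Fin N) : ℝ :=
  if a j = a i then 0 else ⟪b j - b i, a j - a i⟫ / ‖a j - a i‖ ^ 2 - 1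

/-- The quadratic Lyapunov function `Φ(p) = ∑ ‖a i - b i‖²`. -/
noncomputable def Phi {n N : ℕ} (b a : Fin N → EuclideanSpace ℝ (Fin n)) : ℝ :=
  ∑ i, ‖a i - b i‖ ^ 2

/-- Sum over each undirected edge of `G` exactly once. -/
noncomputable def edgeSum {N : ℕ} (G : SimpleGraph (Fin N)) (f : Fin N → Fin N → ℝ) : ℝ :=
  ∑ p ∈ Finset.univ.filter (fun p : Fin N × Fin N => p.1 < p.2 ∧ G.Adj p.1 p.2), f p.1 p.2

/-- `p = a` is an equilibrium of the formation control system: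
`∑_{j ∈ V_i} u_ij (p) • (a i - a j) = 0` for every vertex `i`. -/
noncomputable def IsEquilibrium {n N : ℕ} (G : SimpleGraph (Fin N))
    (b a : Fin N → EuclideanSpace ℝ (Fin n)) : Prop :=
  ∀ i, ∑ j ∈ Finset.univ.filter (fun j => G.Adj i j), uCtrl b a i j • (a i - a j) = 0

-- symmetry of uCtrl
lemma uCtrl_symm {n N : ℕ} (b a : Fin N → EuclideanSpace ℝ (Fin n)) (i j : Fin N) :
    uCtrl b a j i = uCtrl b a i j := by
  unfold uCtrl
  by_cases h : a j = a i
  · rw [if_pos h, if_pos h.symm]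
  · rw [if_neg h, if_neg (fun h' => h h'.symm)]
    have h1 : ⟪b i - b j, a i - a j⟫ = ⟪b j - b i, a j - a i⟫ := by
      rw [show b i - b j = -(b j - b i) by abel, show a i - a j = -(a j - a i) by abel,
        inner_neg_neg]
    have h2 : ‖a i - a j‖ = ‖a j - a i‖ := norm_sub_rev _ _
    rw [h1, h2]

-- pairwise nonpositivity
lemma pair_nonpos {n N : ℕ} (b a : Fin N → EuclideanSpace ℝ (Fin n)) (i j : Fin N) :
    uCtrl b a i j * ⟪a i - a j, a i - b i⟫ + uCtrl b a j i * ⟪a j - a i, a j - b j⟫ ≤ 0 := by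
  rw [uCtrl_symm b a i j]
  by_cases h : a j = a i
  · simp [uCtrl, h]
  · have hd : a i - a j ≠ 0 := fun h' => h (sub_eq_zero.mp h').symm
    have he : (0:ℝ) < ‖a i - a j‖ ^ 2 := pow_pos (norm_pos_iff.mpr hd) 2
    set d := a i - a j with hdd
    set e := ‖d‖ ^ 2 with hee
    set c : ℝ := ⟪b i - b j, d⟫ with hcc
    have hu : uCtrl b a i j = c / e - 1 := by
      unfold uCtrl
      rw [if_neg h]
      have h1 : ⟪b j - b i, a j - a i⟫ = c := by
        rw [hcc, hdd, show b i - b j = -(b j - b i) by abel, show a i - a j = -(a j - a i) by abel,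
          inner_neg_neg]
      have h2 : ‖a j - a i‖ = ‖d‖ := norm_sub_rev _ _
      rw [h1, h2]
    have hsum : ⟪d, a i - b i⟫ + ⟪a j - a i, a j - b j⟫ = e - c := by
      have : a j - a i = -d := by rw [hdd]; abel
      rw [this, inner_neg_left, ← sub_eq_add_neg, ← inner_sub_right,
        show (a i - b i) - (a j - b j) = d - (b i - b j) by rw [hdd]; abel,
        inner_sub_right, real_inner_self_eq_norm_sq, ← hee, real_inner_comm]
    rw [hu, ← mul_add, hsum]
    have : (c / e - 1) * (e - c) = -((e - c)^2 / e) := by field_simp; ring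
    rw [this]
    have h4 : (0:ℝ) ≤ (e - c)^2 / e := div_nonneg (sq_nonneg _) he.le
    linarith


/-- Along a differentiable solution of the formation control system on the interval `[s,t]`,
the Lyapunov function `Φ` is nonincreasing: `Φ(p(t)) ≤ Φ(p(s))` whenever `t ≥ s`. -/
theorem lyapunov_nonincreasing {n N : ℕ} (G : SimpleGraph (Fin N))
    (b : Fin N → EuclideanSpace ℝ (Fin n))
    (a : ℝ → Fin N → EuclideanSpace ℝ (Fin n))
    (s t : ℝ) (hst : s ≤ t)
    (hderiv : ∀ i, ∀ x ∈ Set.Icc s t, HasDerivAt (fun τ => a τ i)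
      (∑ j ∈ Finset.univ.filter (fun j => G.Adj i j),
        uCtrl b (a x) i j • (a x i - a x j)) x) :
    Phi b (a t) ≤ Phi b (a s) := by
  set v : ℝ → Fin N → EuclideanSpace ℝ (Fin n) := fun x i =>
    ∑ j ∈ Finset.univ.filter (fun j => G.Adj i j), uCtrl b (a x) i j • (a x i - a x j) with hv
  set D : ℝ → ℝ := fun x => ∑ i, 2 * ⟪v x i, a x i - b i⟫ with hD
  -- derivative of Phi ∘ a
  have hF : ∀ x ∈ Set.Icc s t, HasDerivAt (fun τ => Phi b (a τ)) (D x) x := by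
    intro x hx
    have : HasDerivAt (fun τ => ∑ i, ‖a τ i - b i‖ ^ 2) (D x) x := by
      apply HasDerivAt.fun_sum
      intro i _
      have h1 : HasDerivAt (fun τ => a τ i - b i) (v x i) x := (hderiv i x hx).sub_const _
      have h2 := (HasDerivAt.inner ℝ h1 h1 : HasDerivAt
        (fun τ => ⟪a τ i - b i, a τ i - b i⟫) _ x)
      have heq : (fun τ => ⟪a τ i - b i, a τ i - b i⟫) = fun τ => ‖a τ i - b i‖ ^ 2 := by
        funext τ; rw [real_inner_self_eq_norm_sq]
      rw [heq] at h2
      refine h2.congr_deriv ?_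
      rw [real_inner_comm (a x i - b i) (v x i)]; ring
    exact this
  -- nonpositivity of D
  have hDnp : ∀ x, D x ≤ 0 := by
    intro x
    have hrw : ∀ i, ⟪v x i, a x i - b i⟫ =
        ∑ j ∈ Finset.univ.filter (fun j => G.Adj i j),
          uCtrl b (a x) i j * ⟪a x i - a x j, a x i - b i⟫ := by
      intro i
      rw [hv]
      simp only [sum_inner, real_inner_smul_left]
    have hDeq : D x = 2 * ∑ i, ∑ j ∈ Finset.univ.filter (fun j => G.Adj i j),
        uCtrl b (a x) i j * ⟪a x i - a x j, a x i - b i⟫ := by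
      rw [hD, Finset.mul_sum]
      exact Finset.sum_congr rfl fun i _ => by rw [hrw i]
    rw [hDeq]
    set g : Fin N → Fin N → ℝ := fun i j => uCtrl b (a x) i j * ⟪a x i - a x j, a x i - b i⟫
    have hS : ∑ i, ∑ j ∈ Finset.univ.filter (fun j => G.Adj i j), g i j =
        ∑ p : Fin N × Fin N, if G.Adj p.1 p.2 then g p.1 p.2 else 0 := by
      rw [Fintype.sum_prod_type]
      exact Finset.sum_congr rfl fun i _ => (Finset.sum_filter _ _)
    have hswap : ∑ p : Fin N × Fin N, (if G.Adj p.1 p.2 then g p.1 p.2 else 0) =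
        ∑ p : Fin N × Fin N, (if G.Adj p.1 p.2 then g p.2 p.1 else 0) := by
      rw [← (Equiv.prodComm (Fin N) (Fin N)).sum_comp
        (fun p : Fin N × Fin N => if G.Adj p.1 p.2 then g p.2 p.1 else 0)]
      apply Finset.sum_congr rfl
      intro p _
      simp only [Equiv.prodComm_apply, Prod.swap]
      by_cases h : G.Adj p.1 p.2
      · rw [if_pos h]; exact (if_pos h.symm).symm
      · rw [if_neg h]; exact (if_neg (fun h' : G.Adj p.2 p.1 => h h'.symm)).symm
    have key : ∑ i, ∑ j ∈ Finset.univ.filter (fun j => G.Adj i j), g i j ≤ 0 := by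
      have h2 : 2 * ∑ p : Fin N × Fin N, (if G.Adj p.1 p.2 then g p.1 p.2 else 0) =
          ∑ p : Fin N × Fin N, ((if G.Adj p.1 p.2 then g p.1 p.2 else 0) +
            (if G.Adj p.1 p.2 then g p.2 p.1 else 0)) := by
        rw [Finset.sum_add_distrib, ← hswap]; ring
      have h3 : ∑ p : Fin N × Fin N, ((if G.Adj p.1 p.2 then g p.1 p.2 else 0) +
            (if G.Adj p.1 p.2 then g p.2 p.1 else 0)) ≤ 0 := by
        apply Finset.sum_nonpos
        intro p _
        by_cases h : G.Adj p.1 p.2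
        · rw [if_pos h, if_pos h]
          exact pair_nonpos b (a x) p.1 p.2
        · simp [h]
      rw [hS]
      linarith [h2, h3]
    linarith [key]
  -- conclude
  have hmono : AntitoneOn (fun τ => Phi b (a τ)) (Set.Icc s t) := by
    apply antitoneOn_of_hasDerivWithinAt_nonpos (convex_Icc s t)
      (f' := D)
    · exact fun x hx => (hF x hx).continuousAt.continuousWithinAt
    · intro x hx
      exact (hF x (interior_subset hx)).hasDerivWithinAt
    · exact fun x _ => hDnp x
  exact hmono (Set.left_mem_Icc.mpr hst) (Set.right_mem_Icc.mpr hst) hst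
end

section
/- Let G = (V,E) be an undirected graph on V = {1,…,k} and suppose vertex k is a leaf of G whose unique neighbor is vertex 1. If p = (a_1,…,a_k) is an equilibrium of the formation control system on G, then u_{1k}(p) = 0, and the sub-configuration p' = (a_1,…,a_{k−1}) is an equilibrium of the formation control system on the subgraph G' induced by the vertices {1,…,k−1} (with the same target vectors b_1,…,b_{k−1}). -/
open Finset
open scoped RealInnerProductSpace Classical

/-- If vertex `k` (here `Fin.last N`) is a leaf of `G` whose unique neighbor is vertex `1`
(here `0`), and `p = a` is an equilibrium of the formation control system on `G`, then
`u_{1k}(p) = 0` and the sub-configuration `(a_1, …, a_{k-1})` is an equilibrium of the system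
on the subgraph induced by the first `k-1` vertices (with the same targets). -/
theorem leaf_equilibrium {n N : ℕ} (G : SimpleGraph (Fin (N + 1)))
    (hleaf : G.neighborSet (Fin.last N) = {(0 : Fin (N + 1))})
    (b a : Fin (N + 1) → EuclideanSpace ℝ (Fin n))
    (heq : IsEquilibrium G b a) :
    uCtrl b a (0 : Fin (N + 1)) (Fin.last N) = 0 ∧
      IsEquilibrium (G.comap (Fin.castSucc : Fin N → Fin (N + 1)))
        (b ∘ Fin.castSucc) (a ∘ Fin.castSucc) := by
  have hadjiff : ∀ j, G.Adj (Fin.last N) j ↔ j = 0 := by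
    intro j
    have := Set.ext_iff.mp hleaf j
    simpa [SimpleGraph.mem_neighborSet] using this
  have hfilter : Finset.univ.filter (fun j => G.Adj (Fin.last N) j) = {(0 : Fin (N+1))} := by
    ext j; simp [hadjiff]
  have hlast := heq (Fin.last N)
  rw [hfilter, Finset.sum_singleton] at hlast
  have hu0 : uCtrl b a (Fin.last N) 0 = 0 := by
    by_cases hc : a 0 = a (Fin.last N)
    · simp [uCtrl, hc]
    · rcases smul_eq_zero.mp hlast with h | h
      · exact h
      · exact absurd (sub_eq_zero.mp h).symm hc
  have husym : uCtrl b a 0 (Fin.last N) = 0 := by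
    rw [← hu0]
    unfold uCtrl
    by_cases hc : a (Fin.last N) = a 0
    · rw [if_pos hc, if_pos hc.symm]
    · rw [if_neg hc, if_neg (fun h => hc h.symm),
        ← neg_sub (b 0) (b (Fin.last N)), ← neg_sub (a 0) (a (Fin.last N)),
        inner_neg_neg, norm_neg]
  refine ⟨husym, ?_⟩
  intro i
  have hi := heq (Fin.castSucc i)
  rw [Finset.sum_filter] at hi
  rw [Fin.sum_univ_castSucc] at hi
  rw [Finset.sum_filter]
  have hterm : (if G.Adj (Fin.castSucc i) (Fin.last N) then
      uCtrl b a (Fin.castSucc i) (Fin.last N) • (a (Fin.castSucc i) - a (Fin.last N)) else 0) = 0 := by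
    by_cases hc : G.Adj (Fin.castSucc i) (Fin.last N)
    · have h0 : Fin.castSucc i = 0 := (hadjiff _).mp hc.symm
      rw [if_pos hc, h0, husym, zero_smul]
    · rw [if_neg hc]
  rw [hterm, add_zero] at hi
  convert hi using 2 with j
  rfl
end
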